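/- arXiv:2411.07180 — 5 statements merged into one kernel-verified Lean document; each statement's English description precedes it below -/
import Mathlib

section
/- Let φ ∈ ℝ^M and let Y₁,…,Y_M be i.i.d. standard Gumbel. Conditioned on the event {argmax_m (φ_m + Y_m) = k}, the perturbed maximum value φ_k + Y_k has the same distribution as the unconditioned maximum max_m (φ_m + Y_m), namely Gumbel with location log Σ_m exp(φ_m). -/
open MeasureTheory ProbabilityTheory Set

namespace GumbelAux

open intervalIntegral

noncomputable def g : ℝ → ℝ := fun u => -Real.log (-Real.log u)

lemma g_meas : Measurable g := (Real.measurable_log.comp Real.measurable_log.neg).neg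

noncomputable def ρ : Measure ℝ := volume.restrict (Set.Ioo 0 1)

instance : IsFiniteMeasure ρ := by
  constructor
  rw [ρ, Measure.restrict_apply_univ]
  simp [Real.volume_Ioo]

lemma g_preimage_Iic (t : ℝ) :
    g ⁻¹' Set.Iic t ∩ Set.Ioo 0 1 = Set.Ioc 0 (Real.exp (-Real.exp (-t))) := by
  have hb1 : Real.exp (-Real.exp (-t)) < 1 := by
    rw [← Real.exp_zero]
    exact Real.exp_lt_exp.2 (neg_lt_zero.2 (Real.exp_pos _))
  ext u
  simp only [Set.mem_inter_iff, Set.mem_preimage, Set.mem_Iic, Set.mem_Ioo, Set.mem_Ioc, g]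
  constructor
  · rintro ⟨hgu, hu0, hu1⟩
    refine ⟨hu0, ?_⟩
    have hlu : 0 < -Real.log u := by
      have := Real.log_neg hu0 hu1; linarith
    have h1 : -t ≤ Real.log (-Real.log u) := by linarith
    have h2 : Real.exp (-t) ≤ -Real.log u := by
      calc Real.exp (-t) ≤ Real.exp (Real.log (-Real.log u)) := Real.exp_le_exp.2 h1
        _ = -Real.log u := Real.exp_log hlu
    have h3 : Real.log u ≤ -Real.exp (-t) := by linarith
    calc u = Real.exp (Real.log u) := (Real.exp_log hu0).symm
      _ ≤ Real.exp (-Real.exp (-t)) := Real.exp_le_exp.2 h3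
  · rintro ⟨hu0, hub⟩
    have hu1 : u < 1 := lt_of_le_of_lt hub hb1
    have hlub : Real.log u ≤ -Real.exp (-t) := by
      calc Real.log u ≤ Real.log (Real.exp (-Real.exp (-t))) := Real.log_le_log hu0 hub
        _ = -Real.exp (-t) := Real.log_exp _
    have hlu : Real.exp (-t) ≤ -Real.log u := by linarith
    have hlu0 : 0 < -Real.log u := lt_of_lt_of_le (Real.exp_pos _) hlu
    refine ⟨?_, hu0, hu1⟩
    have : -t ≤ Real.log (-Real.log u) := by
      calc -t = Real.log (Real.exp (-t)) := (Real.log_exp _).symm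
        _ ≤ Real.log (-Real.log u) := Real.log_le_log (Real.exp_pos _) hlu
    linarith

lemma mapg_Iic (t : ℝ) : (ρ.map g) (Set.Iic t) = ENNReal.ofReal (Real.exp (-Real.exp (-t))) := by
  rw [Measure.map_apply g_meas measurableSet_Iic, ρ,
    Measure.restrict_apply (g_meas measurableSet_Iic), g_preimage_Iic, Real.volume_Ioc]
  rw [sub_zero]

instance : IsFiniteMeasure (ρ.map g) := by
  constructor
  rw [Measure.map_apply g_meas MeasurableSet.univ]
  exact measure_lt_top _ _

lemma lint_rpow {c b : ℝ} (hc : 0 < c) (hb : 0 ≤ b) :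
    ∫⁻ u in Set.Ioc 0 b, ENNReal.ofReal (u ^ (c - 1)) = ENNReal.ofReal (b ^ c / c) := by
  have hint : IntervalIntegrable (fun u : ℝ => u ^ (c - 1)) volume 0 b :=
    intervalIntegrable_rpow' (by linarith)
  have hIntOn : IntegrableOn (fun u : ℝ => u ^ (c - 1)) (Set.Ioc 0 b) volume := hint.1
  rw [← ofReal_integral_eq_lintegral_ofReal hIntOn]
  · congr 1
    rw [← intervalIntegral.integral_of_le hb,
      integral_rpow (Or.inl (by linarith : (-1 : ℝ) < c - 1))]
    rw [sub_add_cancel, Real.zero_rpow hc.ne', sub_zero]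
  · filter_upwards [ae_restrict_mem measurableSet_Ioc] with u hu
    exact Real.rpow_nonneg hu.1.le _

lemma f_meas (c : ℝ) :
    Measurable fun y : ℝ => ENNReal.ofReal (Real.exp (-((c - 1) * Real.exp (-y)))) := by
  fun_prop

lemma g_comp (c : ℝ) {u : ℝ} (hu0 : 0 < u) (hu1 : u < 1) :
    ENNReal.ofReal (Real.exp (-((c - 1) * Real.exp (-g u)))) = ENNReal.ofReal (u ^ (c - 1)) := by
  have hlu : 0 < -Real.log u := by
    have := Real.log_neg hu0 hu1; linarith
  have hexp : Real.exp (-g u) = -Real.log u := by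
    rw [g, neg_neg]
    exact Real.exp_log hlu
  rw [hexp]
  congr 1
  rw [Real.rpow_def_of_pos hu0]
  ring_nf

lemma gumbel_setLIntegral (c : ℝ) (hc : 0 < c) (t : ℝ) :
    ∫⁻ y in Set.Iic t, ENNReal.ofReal (Real.exp (-((c - 1) * Real.exp (-y)))) ∂(ρ.map g)
      = ENNReal.ofReal (Real.exp (-(c * Real.exp (-t))) / c) := by
  have hb1 : Real.exp (-Real.exp (-t)) < 1 := by
    rw [← Real.exp_zero]
    exact Real.exp_lt_exp.2 (neg_lt_zero.2 (Real.exp_pos _))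
  rw [setLIntegral_map measurableSet_Iic (f_meas c) g_meas]
  rw [ρ, Measure.restrict_restrict (g_meas measurableSet_Iic), g_preimage_Iic]
  rw [setLIntegral_congr_fun measurableSet_Ioc
    (fun u hu => g_comp c hu.1 (lt_of_le_of_lt hu.2 hb1))]
  rw [lint_rpow hc (Real.exp_pos _).le]
  congr 1
  rw [Real.rpow_def_of_pos (Real.exp_pos _), Real.log_exp]
  ring_nf

lemma gumbel_lintegral (c : ℝ) (hc : 0 < c) :
    ∫⁻ y, ENNReal.ofReal (Real.exp (-((c - 1) * Real.exp (-y)))) ∂(ρ.map g)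
      = ENNReal.ofReal (1 / c) := by
  rw [lintegral_map (f_meas c) g_meas, ρ]
  rw [setLIntegral_congr_fun measurableSet_Ioo
    (fun u hu => g_comp c hu.1 hu.2)]
  rw [setLIntegral_congr (Ioo_ae_eq_Ioc (a := (0:ℝ)) (b := 1))]
  rw [lint_rpow hc zero_le_one, Real.one_rpow]

lemma prob_lt {Ω : Type*} [MeasureSpace Ω] (Z : Ω → ℝ)
    (hCDF : ∀ x : ℝ, ℙ {ω | Z ω ≤ x} = ENNReal.ofReal (Real.exp (-Real.exp (-x)))) (a : ℝ) :
    ℙ {ω | Z ω < a} = ENNReal.ofReal (Real.exp (-Real.exp (-a))) := by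
  have hmono : Monotone fun n : ℕ => {ω | Z ω ≤ a - 1 / (n + 1)} := by
    intro n m hnm ω hω
    simp only [Set.mem_setOf_eq] at *
    have h1 : (1:ℝ) / (m + 1) ≤ 1 / (n + 1) := by
      apply one_div_le_one_div_of_le (by positivity)
      have : (n:ℝ) ≤ m := by exact_mod_cast hnm
      linarith
    linarith
  have hUnion : {ω | Z ω < a} = ⋃ n : ℕ, {ω | Z ω ≤ a - 1 / (n + 1)} := by
    ext ω
    simp only [Set.mem_setOf_eq, Set.mem_iUnion]
    constructor
    · intro h
      obtain ⟨n, hn⟩ := exists_nat_one_div_lt (show 0 < a - Z ω by linarith)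
      exact ⟨n, by linarith⟩
    · rintro ⟨n, hn⟩
      have : (0:ℝ) < 1 / ((n:ℝ) + 1) := by positivity
      linarith
  have h1 := tendsto_measure_iUnion_atTop (μ := ℙ) hmono
  rw [← hUnion] at h1
  have hF : Continuous fun x : ℝ => ENNReal.ofReal (Real.exp (-Real.exp (-x))) :=
    ENNReal.continuous_ofReal.comp (Real.continuous_exp.comp (Real.continuous_exp.comp continuous_neg).neg)
  have h2 : Filter.Tendsto (fun n : ℕ => ℙ {ω | Z ω ≤ a - 1 / (n + 1)}) Filter.atTop
      (nhds (ENNReal.ofReal (Real.exp (-Real.exp (-a))))) := by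
    simp_rw [hCDF]
    have hlim : Filter.Tendsto (fun n : ℕ => a - 1 / ((n:ℝ) + 1)) Filter.atTop (nhds a) := by
      have := tendsto_one_div_add_atTop_nhds_zero_nat (𝕜 := ℝ)
      simpa using (tendsto_const_nhds (x := a) (f := Filter.atTop)).sub this
    exact (hF.tendsto a).comp hlim
  exact tendsto_nhds_unique h1 h2

end GumbelAux

set_option maxHeartbeats 1000000 in
/-- Conditioned on `argmax_m (φ m + Y m) = k`, the perturbed maximum `φ k + Y k`
has the same distribution as the unconditioned maximum: Gumbel with location
`log (∑ m, exp (φ m))`. -/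
theorem gumbel_max_given_argmax {Ω : Type*} [MeasureSpace Ω]
    [IsProbabilityMeasure (ℙ : Measure Ω)]
    {M : ℕ} (hM : 0 < M) (φ : Fin M → ℝ) (Y : Fin M → Ω → ℝ)
    (hmeas : ∀ m, Measurable (Y m))
    (hindep : iIndepFun Y ℙ)
    (hCDF : ∀ m, ∀ x : ℝ, ℙ {ω | Y m ω ≤ x} = ENNReal.ofReal (Real.exp (-Real.exp (-x))))
    (k : Fin M) :
    ∀ x : ℝ,
      (ℙ[|{ω | ∀ m, m ≠ k → φ m + Y m ω < φ k + Y k ω}]) {ω | φ k + Y k ω ≤ x}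
        = ENNReal.ofReal (Real.exp (-Real.exp (-(x - Real.log (∑ m, Real.exp (φ m)))))) := by
  classical
  intro x
  set S' : ℝ := ∑ m, Real.exp (φ m) with hS'
  set c : ℝ := ∑ m, Real.exp (φ m - φ k) with hcdef
  have hc1 : 1 ≤ c := by
    have h := Finset.single_le_sum (f := fun m => Real.exp (φ m - φ k))
      (fun m _ => (Real.exp_pos _).le) (Finset.mem_univ k)
    simpa using h
  have hc0 : 0 < c := lt_of_lt_of_le one_pos hc1
  set A : Set Ω := {ω | ∀ m, m ≠ k → φ m + Y m ω < φ k + Y k ω} with hAdef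
  have hAmeas : MeasurableSet A := by
    have hAeq : A = ⋂ m, {ω | m ≠ k → φ m + Y m ω < φ k + Y k ω} := by
      ext ω; simp [hAdef, Set.mem_iInter]
    rw [hAeq]
    refine MeasurableSet.iInter fun m => ?_
    by_cases h : m = k
    · subst h; simp
    · have : {ω | m ≠ k → φ m + Y m ω < φ k + Y k ω}
          = {ω | φ m + Y m ω < φ k + Y k ω} := by
        ext ω; simp [h]
      rw [this]
      exact measurableSet_lt (measurable_const.add (hmeas m)) (measurable_const.add (hmeas k))
  set Sf : Finset (Fin M) := Finset.univ.erase k with hSf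
  set V : Ω → (↥Sf → ℝ) := fun ω i => Y i ω with hV
  have hVmeas : Measurable V := measurable_pi_lambda _ fun i => hmeas i
  have hdisj : Disjoint Sf ({k} : Finset (Fin M)) :=
    Finset.disjoint_singleton_right.mpr (Finset.notMem_erase k _)
  have hIndep : IndepFun V (Y k) ℙ := by
    have h0 := hindep.indepFun_finset Sf {k} hdisj hmeas
    have h1 := h0.comp (measurable_id (α := ↥Sf → ℝ))
      (measurable_pi_apply (⟨k, Finset.mem_singleton_self k⟩ : ({k} : Finset (Fin M))))
    exact h1
  haveI : IsProbabilityMeasure (Measure.map (Y k) ℙ) := Measure.isProbabilityMeasure_map (hmeas k).aemeasurable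
  haveI : IsProbabilityMeasure (Measure.map V ℙ) := Measure.isProbabilityMeasure_map hVmeas.aemeasurable
  have hjoint : Measure.map (fun ω => (V ω, Y k ω)) ℙ = (Measure.map V ℙ).prod (Measure.map (Y k) ℙ) :=
    (indepFun_iff_map_prod_eq_prod_map_map hVmeas.aemeasurable (hmeas k).aemeasurable).1 hIndep
  have hμk : Measure.map (Y k) ℙ = GumbelAux.ρ.map GumbelAux.g := by
    refine Measure.ext_of_Iic _ _ fun t => ?_
    rw [Measure.map_apply (hmeas k) measurableSet_Iic, GumbelAux.mapg_Iic]
    exact hCDF k t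
  -- measure of the slice set
  have hD : ∀ y : ℝ, (Measure.map V ℙ) {v : ↥Sf → ℝ | ∀ i : ↥Sf, φ i.1 + v i < φ k + y}
      = ENNReal.ofReal (Real.exp (-((c - 1) * Real.exp (-y)))) := by
    intro y
    have hDm : MeasurableSet {v : ↥Sf → ℝ | ∀ i : ↥Sf, φ i.1 + v i < φ k + y} := by
      rw [Set.setOf_forall]
      exact MeasurableSet.iInter fun i =>
        measurableSet_lt (measurable_const.add (measurable_pi_apply i)) measurable_const
    rw [Measure.map_apply hVmeas hDm]
    have hpre : V ⁻¹' {v | ∀ i : ↥Sf, φ i.1 + v i < φ k + y}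
        = ⋂ m ∈ Sf, Y m ⁻¹' Set.Iio (φ k + y - φ m) := by
      ext ω
      simp only [Set.mem_preimage, Set.mem_setOf_eq, Set.mem_iInter, Set.mem_Iio, hV]
      constructor
      · intro h m hm
        have := h ⟨m, hm⟩
        dsimp at this
        linarith
      · intro h i
        have := h i i.2
        linarith
    rw [hpre, hindep.measure_inter_preimage_eq_mul Sf (fun m _ => measurableSet_Iio)]
    have hfac : ∀ m ∈ Sf, ℙ (Y m ⁻¹' Set.Iio (φ k + y - φ m))
        = ENNReal.ofReal (Real.exp (-(Real.exp (φ m - φ k) * Real.exp (-y)))) := by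
      intro m _
      have h := GumbelAux.prob_lt (Y m) (hCDF m) (φ k + y - φ m)
      rw [show (Y m ⁻¹' Set.Iio (φ k + y - φ m)) = {ω | Y m ω < φ k + y - φ m} from rfl, h]
      congr 2
      rw [← Real.exp_add]
      ring_nf
    rw [Finset.prod_congr rfl hfac,
      ← ENNReal.ofReal_prod_of_nonneg (fun m _ => (Real.exp_pos _).le)]
    congr 1
    rw [← Real.exp_sum]
    congr 1
    have hsum : ∑ m ∈ Sf, Real.exp (φ m - φ k) = c - 1 := by
      have h := Finset.sum_erase_add Finset.univ (fun m => Real.exp (φ m - φ k))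
        (Finset.mem_univ k)
      rw [hcdef, ← h, hSf]
      simp
    rw [Finset.sum_neg_distrib, ← Finset.sum_mul, hsum]
  -- the unconditioned argmax event as a product-space set
  set C1 : Set ((↥Sf → ℝ) × ℝ) := {p | ∀ i : ↥Sf, φ i.1 + p.1 i < φ k + p.2} with hC1
  have hC1m : MeasurableSet C1 := by
    rw [hC1, Set.setOf_forall]
    exact MeasurableSet.iInter fun i => measurableSet_lt (by fun_prop) (by fun_prop)
  have hpreA : (fun ω => (V ω, Y k ω)) ⁻¹' C1 = A := by
    ext ω
    simp only [Set.mem_preimage, Set.mem_setOf_eq, hAdef, hV, hC1]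
    constructor
    · intro h1 m hm
      exact h1 ⟨m, Finset.mem_erase.mpr ⟨hm, Finset.mem_univ m⟩⟩
    · intro h1 i
      exact h1 i (Finset.mem_erase.mp i.2).1
  have hPA : ℙ A = ENNReal.ofReal (1 / c) := by
    rw [← hpreA, ← Measure.map_apply (hVmeas.prodMk (hmeas k)) hC1m, hjoint,
      Measure.prod_apply_symm hC1m]
    have hslice : ∀ y : ℝ, (Measure.map V ℙ) ((fun v => (v, y)) ⁻¹' C1)
        = ENNReal.ofReal (Real.exp (-((c - 1) * Real.exp (-y)))) := fun y => hD y
    simp_rw [hslice]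
    rw [hμk, GumbelAux.gumbel_lintegral c hc0]
  have hkey : ∀ t : ℝ,
      ℙ (A ∩ {ω | Y k ω ≤ t}) = ENNReal.ofReal (Real.exp (-(c * Real.exp (-t))) / c) := by
    intro t
    set C : Set ((↥Sf → ℝ) × ℝ) := C1 ∩ {p | p.2 ≤ t} with hC
    have hCm : MeasurableSet C := hC1m.inter (measurable_snd measurableSet_Iic)
    have hpre : (fun ω => (V ω, Y k ω)) ⁻¹' C = A ∩ {ω | Y k ω ≤ t} := by
      rw [hC, Set.preimage_inter, hpreA]
      rfl
    rw [← hpre, ← Measure.map_apply (hVmeas.prodMk (hmeas k)) hCm, hjoint,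
      Measure.prod_apply_symm hCm]
    have hslice : ∀ y : ℝ, (Measure.map V ℙ) ((fun v => (v, y)) ⁻¹' C)
        = Set.indicator (Set.Iic t)
          (fun y => ENNReal.ofReal (Real.exp (-((c - 1) * Real.exp (-y))))) y := by
      intro y
      by_cases hy : y ≤ t
      · rw [Set.indicator_of_mem (show y ∈ Set.Iic t from hy)]
        have he : (fun v : ↥Sf → ℝ => (v, y)) ⁻¹' C = {v | ∀ i : ↥Sf, φ i.1 + v i < φ k + y} := by
          ext v; simp [hC, hC1, hy]
        rw [he, hD]
      · rw [Set.indicator_of_notMem (show y ∉ Set.Iic t from hy)]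
        have he : (fun v : ↥Sf → ℝ => (v, y)) ⁻¹' C = ∅ := by
          ext v; simp [hC, hC1, hy]
        simp [he]
    simp_rw [hslice]
    rw [lintegral_indicator measurableSet_Iic, hμk, GumbelAux.gumbel_setLIntegral c hc0 t]
  have hx : A ∩ {ω | φ k + Y k ω ≤ x} = A ∩ {ω | Y k ω ≤ x - φ k} := by
    congr 1
    ext ω
    simp only [Set.mem_setOf_eq]
    constructor <;> intro h <;> linarith
  rw [ProbabilityTheory.cond_apply hAmeas, hx, hkey (x - φ k), hPA]
  have h1 : (ENNReal.ofReal (1 / c))⁻¹ = ENNReal.ofReal c := by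
    rw [one_div, ENNReal.ofReal_inv_of_pos hc0, inv_inv]
  rw [h1, ← ENNReal.ofReal_mul hc0.le]
  congr 1
  have h2 : c * (Real.exp (-(c * Real.exp (-(x - φ k)))) / c)
      = Real.exp (-(c * Real.exp (-(x - φ k)))) := by
    rw [mul_comm]
    exact div_mul_cancel₀ _ hc0.ne'
  rw [h2]
  congr 1
  have hS'pos : 0 < S' := Finset.sum_pos (fun m _ => Real.exp_pos _) ⟨k, Finset.mem_univ k⟩
  have h3 : Real.exp (-(x - Real.log S')) = S' * Real.exp (-x) := by
    rw [show -(x - Real.log S') = Real.log S' + -x by ring, Real.exp_add, Real.exp_log hS'pos]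
  have h4 : c * Real.exp (-(x - φ k)) = S' * Real.exp (-x) := by
    rw [hcdef, hS', Finset.sum_mul, Finset.sum_mul]
    refine Finset.sum_congr rfl fun m _ => ?_
    rw [← Real.exp_add, ← Real.exp_add]
    ring_nf
  rw [h4, h3]
end

section
/- (Truncated Gumbel sampling) Let G ~ Gumbel(0,1) and b ∈ ℝ. Then the random variable -log(exp(-b) + exp(-G)) has the distribution of a standard Gumbel random variable conditioned to be at most b, i.e., its CDF is exp(-exp(-min(x,b)))/exp(-exp(-b)) for x ≤ b and 1 for x > b. -/
open MeasureTheory ProbabilityTheory Set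

/-- Truncated Gumbel sampling: if `G ~ Gumbel(0,1)` and `b : ℝ`, then
`-log (exp (-b) + exp (-G))` is distributed as a standard Gumbel conditioned to
be at most `b`: its CDF is `exp (-exp (-x)) / exp (-exp (-b))` for `x ≤ b`
and `1` for `x > b`. -/
theorem truncated_gumbel {Ω : Type*} [MeasureSpace Ω] [IsProbabilityMeasure (ℙ : Measure Ω)]
    (G : Ω → ℝ) (hG : Measurable G)
    (hCDF : ∀ x : ℝ, ℙ {ω | G ω ≤ x} = ENNReal.ofReal (Real.exp (-Real.exp (-x))))
    (b : ℝ) :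
    ∀ x : ℝ,
      ℙ {ω | -Real.log (Real.exp (-b) + Real.exp (-(G ω))) ≤ x}
        = if x ≤ b then
            ENNReal.ofReal (Real.exp (-Real.exp (-x)) / Real.exp (-Real.exp (-b)))
          else 1 := by
  intro x
  have hs : ∀ ω, (0:ℝ) < Real.exp (-b) + Real.exp (-(G ω)) := fun ω => by positivity
  have key : ∀ ω, (-Real.log (Real.exp (-b) + Real.exp (-(G ω))) ≤ x ↔
      Real.exp (-x) - Real.exp (-b) ≤ Real.exp (-(G ω))) := by
    intro ω
    rw [neg_le, Real.le_log_iff_exp_le (hs ω)]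
    constructor <;> intro h <;> linarith
  by_cases hxb : x ≤ b
  · rw [if_pos hxb]
    rcases eq_or_lt_of_le hxb with h | h
    · subst h
      have huniv : {ω | -Real.log (Real.exp (-x) + Real.exp (-(G ω))) ≤ x} = Set.univ := by
        ext ω
        simp only [mem_setOf_eq, mem_univ, iff_true]
        rw [key ω]
        have := Real.exp_pos (-(G ω))
        linarith
      rw [huniv, measure_univ, div_self (Real.exp_ne_zero _), ENNReal.ofReal_one]
    · set c := Real.exp (-x) - Real.exp (-b) with hc
      have hcpos : 0 < c := sub_pos.2 (Real.exp_lt_exp.2 (by linarith))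
      have hset : {ω | -Real.log (Real.exp (-b) + Real.exp (-(G ω))) ≤ x}
          = {ω | G ω ≤ -Real.log c} := by
        ext ω
        simp only [mem_setOf_eq]
        rw [key ω, ← Real.log_le_iff_le_exp hcpos, ← le_neg]
      rw [hset, hCDF]
      congr 1
      rw [neg_neg, Real.exp_log hcpos, eq_div_iff (Real.exp_ne_zero _), ← Real.exp_add]
      congr 1
      rw [hc]
      ring
  · rw [if_neg hxb]
    have huniv : {ω | -Real.log (Real.exp (-b) + Real.exp (-(G ω))) ≤ x} = Set.univ := by
      ext ω
      simp only [mem_setOf_eq, mem_univ, iff_true]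
      rw [key ω]
      have h1 := Real.exp_pos (-(G ω))
      have h2 : Real.exp (-x) < Real.exp (-b) := Real.exp_lt_exp.2 (by linarith [lt_of_not_ge hxb])
      linarith
    rw [huniv, measure_univ]
end

section
/- (Counterfactual stability of Gumbel-max over two categories) Let φ, φ̃ ∈ ℝ² be original and counterfactual logits with corresponding softmax probabilities p and p̃. Suppose the observed Gumbel-max outcome under φ is category 1. If p̃₁/p₁ ≥ p̃₂/p₂, then the counterfactual outcome under φ̃ with the same Gumbel noise is almost surely also category 1. -/
open MeasureTheory ProbabilityTheory Set

/-- Counterfactual stability of Gumbel-max over two categories: if the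
softmax probability ratios satisfy `p̃₁ / p₁ ≥ p̃₂ / p₂`, then almost surely,
whenever the factual Gumbel-max outcome (under `φ`) is category 1, the
counterfactual outcome (under `φ̃`, same noise) is also category 1. -/
theorem gumbel_max_counterfactual_stability_two {Ω : Type*} [MeasureSpace Ω]
    [IsProbabilityMeasure (ℙ : Measure Ω)]
    (φ φt : Fin 2 → ℝ) (Y : Fin 2 → Ω → ℝ)
    (hmeas : ∀ m, Measurable (Y m))
    (hindep : iIndepFun Y ℙ)
    (hCDF : ∀ m, ∀ x : ℝ, ℙ {ω | Y m ω ≤ x} = ENNReal.ofReal (Real.exp (-Real.exp (-x))))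
    (p pt : Fin 2 → ℝ)
    (hp : ∀ m, p m = Real.exp (φ m) / (Real.exp (φ 0) + Real.exp (φ 1)))
    (hpt : ∀ m, pt m = Real.exp (φt m) / (Real.exp (φt 0) + Real.exp (φt 1)))
    (hratio : pt 0 / p 0 ≥ pt 1 / p 1) :
    ∀ᵐ ω ∂(ℙ : Measure Ω),
      φ 1 + Y 1 ω < φ 0 + Y 0 ω → φt 1 + Y 1 ω < φt 0 + Y 0 ω := by
  have hS : 0 < Real.exp (φ 0) + Real.exp (φ 1) := by positivity
  have hSt : 0 < Real.exp (φt 0) + Real.exp (φt 1) := by positivity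
  have key : φt 0 + φ 1 ≥ φt 1 + φ 0 := by
    rw [hp 0, hp 1, hpt 0, hpt 1] at hratio
    have h01 : 0 < Real.exp (φ 0) := Real.exp_pos _
    have h11 : 0 < Real.exp (φ 1) := Real.exp_pos _
    rw [ge_iff_le, div_div_div_eq, div_div_div_eq,
      div_le_div_iff₀ (by positivity) (by positivity)] at hratio
    have h2 : Real.exp (φt 1 + φ 0) ≤ Real.exp (φt 0 + φ 1) := by
      rw [Real.exp_add, Real.exp_add]
      nlinarith [mul_pos hS hSt]
    rw [Real.exp_le_exp] at h2
    linarith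
  refine ae_of_all _ fun ω h => ?_
  linarith
end

section
/- (Counterfactual stability of Gumbel-max, general) Let φ, φ̃ ∈ ℝ^M with softmax probabilities p and p̃. Given Gumbel noise Y₁,…,Y_M, if the factual outcome is argmax_m (φ_m + Y_m) = k and the counterfactual outcome argmax_m (φ̃_m + Y_m) = j with j ≠ k, then necessarily p̃_j / p_j > p̃_k / p_k. -/
open Finset

/-- General counterfactual stability of Gumbel-max: for logits `φ, φ̃` with
softmax probabilities `p, p̃` and a fixed realization `y` of the Gumbel noise,
if the factual outcome is `k` (unique argmax of `φ + y`) and the counterfactual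
outcome is `j ≠ k` (unique argmax of `φ̃ + y`), then `p̃ j / p j > p̃ k / p k`. -/
theorem gumbel_max_counterfactual_stability {M : ℕ} (φ φt : Fin M → ℝ)
    (y : Fin M → ℝ) (p pt : Fin M → ℝ)
    (hp : ∀ m, p m = Real.exp (φ m) / ∑ m', Real.exp (φ m'))
    (hpt : ∀ m, pt m = Real.exp (φt m) / ∑ m', Real.exp (φt m'))
    (k j : Fin M)
    (hk : ∀ m, m ≠ k → φ m + y m < φ k + y k)
    (hj : ∀ m, m ≠ j → φt m + y m < φt j + y j)
    (hjk : j ≠ k) :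
    pt j / p j > pt k / p k := by
  have h1 := hk j hjk
  have h2 := hj k (Ne.symm hjk)
  have hS : (0:ℝ) < ∑ m', Real.exp (φ m') :=
    Finset.sum_pos (fun _ _ => Real.exp_pos _) ⟨k, Finset.mem_univ k⟩
  have hSt : (0:ℝ) < ∑ m', Real.exp (φt m') :=
    Finset.sum_pos (fun _ _ => Real.exp_pos _) ⟨k, Finset.mem_univ k⟩
  have hpj : 0 < p j := by rw [hp]; positivity
  have hpk : 0 < p k := by rw [hp]; positivity
  rw [gt_iff_lt, div_lt_div_iff₀ hpk hpj, hp, hp, hpt, hpt,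
    div_mul_div_comm, div_mul_div_comm, div_lt_div_iff₀ (by positivity) (by positivity)]
  have key : Real.exp (φt k + φ j) < Real.exp (φt j + φ k) := by
    apply Real.exp_lt_exp.mpr; linarith
  rw [Real.exp_add, Real.exp_add] at key
  exact mul_lt_mul_of_pos_right key (mul_pos hSt hS)
end

section
/- Given i.i.d. standard Gumbel variables Y₁,…,Y_M and logits φ, the conditional probability that argmax = m given the maximum value equals v is exp(φ_m)/Σ_{m'} exp(φ_{m'}) for (Lebesgue-almost) every v, i.e., the conditional distribution of the argmax given the max is softmax(φ). -/
open MeasureTheory ProbabilityTheory Set Filter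

namespace GumbelAux

lemma hasDerivAt_aux (b x : ℝ) :
    HasDerivAt (fun t => Real.exp (-(b * Real.exp (-t))))
      (b * Real.exp (-x) * Real.exp (-(b * Real.exp (-x)))) x := by
  have h1 : HasDerivAt (fun t : ℝ => -(b * Real.exp (-t))) (b * Real.exp (-x)) x := by
    have := ((Real.hasDerivAt_exp (-x)).comp x (hasDerivAt_neg x)).const_mul b
    simpa using this.fun_neg
  simpa [mul_comm, Function.comp_def] using (Real.hasDerivAt_exp (-(b * Real.exp (-x)))).comp x h1

lemma integrableOn_aux {b : ℝ} (hb : 0 < b) (a : ℝ) :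
    IntegrableOn (fun x => b * Real.exp (-x) * Real.exp (-(b * Real.exp (-x)))) (Iic a) := by
  have hcont : Continuous (fun x => b * Real.exp (-x) * Real.exp (-(b * Real.exp (-x)))) := by
    continuity
  refine Integrable.mono' ((integrableOn_exp_Iic a).smul (4 / b)) hcont.aestronglyMeasurable ?_
  refine Filter.Eventually.of_forall fun x => ?_
  set u := Real.exp (-x) with hu_def
  have hu : 0 < u := Real.exp_pos _
  have hbu : 0 < b * u := mul_pos hb hu
  have key : (b * u)^2 / 4 ≤ Real.exp (b * u) := by
    have h2 : Real.exp (b * u) = (Real.exp (b * u / 2))^2 := by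
      rw [← Real.exp_nat_mul]; ring_nf
    have h3 : b * u / 2 ≤ Real.exp (b * u / 2) :=
      (Real.add_one_le_exp _).trans' (by linarith)
    nlinarith [Real.exp_pos (b * u / 2)]
  have hKE : Real.exp (b * u) * Real.exp (-(b * u)) = 1 := by
    rw [← Real.exp_add]; simp
  have hx : Real.exp x * u = 1 := by rw [hu_def, ← Real.exp_add]; simp
  have hE : 0 < Real.exp (-(b * u)) := Real.exp_pos _
  have hX : 0 < Real.exp x := Real.exp_pos _
  have hnn : 0 ≤ b * u * Real.exp (-(b * u)) := by positivity
  rw [Pi.smul_apply, smul_eq_mul, Real.norm_of_nonneg hnn]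
  -- b*u*E ≤ (4/b) * e^x, with K*E = 1, K ≥ (bu)²/4, e^x * u = 1
  rw [div_mul_eq_mul_div, le_div_iff₀ hb]
  nlinarith [mul_pos hX hu, mul_pos (mul_pos hb hu) hE]

lemma tendsto_aux {b : ℝ} (hb : 0 < b) :
    Tendsto (fun t => Real.exp (-(b * Real.exp (-t)))) atBot (nhds 0) := by
  apply Real.tendsto_exp_atBot.comp
  apply tendsto_neg_atTop_atBot.comp
  exact (Real.tendsto_exp_atTop.comp tendsto_neg_atBot_atTop).const_mul_atTop hb

lemma key_integral {b : ℝ} (hb : 0 < b) (a : ℝ) :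
    ∫ x in Iic a, b * Real.exp (-x) * Real.exp (-(b * Real.exp (-x)))
      = Real.exp (-(b * Real.exp (-a))) := by
  rw [integral_Iic_of_hasDerivAt_of_tendsto' (fun x _ => hasDerivAt_aux b x)
    (integrableOn_aux hb a) (tendsto_aux hb), sub_zero]

end GumbelAux

namespace GumbelAux2
open GumbelAux

noncomputable def gd : ℝ → ENNReal :=
  fun x => ENNReal.ofReal (Real.exp (-x) * Real.exp (-Real.exp (-x)))

lemma gd_meas : Measurable gd :=
  Measurable.ennreal_ofReal (Continuous.measurable (by continuity))

lemma wd_Iic (a : ℝ) :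
    (volume : Measure ℝ).withDensity gd (Iic a)
      = ENNReal.ofReal (Real.exp (-Real.exp (-a))) := by
  rw [withDensity_apply _ measurableSet_Iic]
  simp only [gd]
  have hint := integrableOn_aux one_pos a
  simp only [one_mul] at hint
  rw [← ofReal_integral_eq_lintegral_ofReal hint
    (Filter.Eventually.of_forall fun x => by positivity)]
  congr 1
  have := key_integral one_pos a
  simp only [one_mul] at this
  rw [this]

lemma eq_withDensity (ν : Measure ℝ) [IsFiniteMeasure ν]
    (h : ∀ x, ν (Iic x) = ENNReal.ofReal (Real.exp (-Real.exp (-x)))) :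
    ν = (volume : Measure ℝ).withDensity gd :=
  Measure.ext_of_Iic ν _ fun a => by rw [h a, wd_Iic]

lemma wd_Iio (a : ℝ) :
    (volume : Measure ℝ).withDensity gd (Iio a)
      = ENNReal.ofReal (Real.exp (-Real.exp (-a))) := by
  rw [withDensity_apply _ measurableSet_Iio,
    setLIntegral_congr (Iio_ae_eq_Iic (a := a)), ← withDensity_apply _ measurableSet_Iic,
    wd_Iic]

lemma key_lintegral {c : ℝ} (hc : 0 ≤ c) (a : ℝ) :
    ∫⁻ x in Iic a, ENNReal.ofReal (Real.exp (-(c * Real.exp (-x))))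
        ∂((volume : Measure ℝ).withDensity gd)
      = ENNReal.ofReal (Real.exp (-((1 + c) * Real.exp (-a))) / (1 + c)) := by
  have h1c : (0:ℝ) < 1 + c := by linarith
  rw [restrict_withDensity measurableSet_Iic,
    lintegral_withDensity_eq_lintegral_mul _ gd_meas
      (Measurable.ennreal_ofReal (Continuous.measurable (by continuity)))]
  have heq : ∀ x : ℝ, (gd * fun x => ENNReal.ofReal (Real.exp (-(c * Real.exp (-x))))) x
      = ENNReal.ofReal ((1 / (1 + c)) *
          ((1 + c) * Real.exp (-x) * Real.exp (-((1 + c) * Real.exp (-x))))) := by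
    intro x
    simp only [Pi.mul_apply, gd, ← ENNReal.ofReal_mul (by positivity : (0:ℝ) ≤ Real.exp (-x) * Real.exp (-Real.exp (-x)))]
    congr 1
    rw [show -((1 + c) * Real.exp (-x)) = -Real.exp (-x) + -(c * Real.exp (-x)) by ring,
      Real.exp_add]
    field_simp
  simp only [heq]
  rw [← ofReal_integral_eq_lintegral_ofReal
      (((integrableOn_aux h1c a).const_mul _))
      (Filter.Eventually.of_forall fun x => by positivity)]
  rw [integral_const_mul, key_integral h1c a]
  congr 1
  field_simp

end GumbelAux2

open GumbelAux GumbelAux2 in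
/-- The conditional distribution of the argmax given the max is `softmax φ`:
for every category `m` and every measurable set `s` of values of the max,
`P(argmax = m, max ∈ s) = softmax(φ)_m · P(max ∈ s)`, i.e. the conditional
probability that the argmax is `m` given the max equals
`exp (φ m) / ∑ m', exp (φ m')` almost everywhere. -/
theorem gumbel_argmax_given_max {Ω : Type*} [MeasureSpace Ω]
    [IsProbabilityMeasure (ℙ : Measure Ω)]
    {M : ℕ} (hM : 0 < M) (φ : Fin M → ℝ) (Y : Fin M → Ω → ℝ)
    (hmeas : ∀ m, Measurable (Y m))
    (hindep : iIndepFun Y ℙ)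
    (hCDF : ∀ m, ∀ x : ℝ, ℙ {ω | Y m ω ≤ x} = ENNReal.ofReal (Real.exp (-Real.exp (-x)))) :
    ∀ (m : Fin M) (s : Set ℝ), MeasurableSet s →
      ℙ ({ω | ∀ m', m' ≠ m → φ m' + Y m' ω < φ m + Y m ω}
          ∩ {ω | (⨆ m', φ m' + Y m' ω) ∈ s})
        = ENNReal.ofReal (Real.exp (φ m) / ∑ m', Real.exp (φ m'))
          * ℙ {ω | (⨆ m', φ m' + Y m' ω) ∈ s} := by
  intro m s hs
  obtain ⟨N, rfl⟩ : ∃ N, M = N + 1 := ⟨M - 1, (Nat.succ_pred_eq_of_pos hM).symm⟩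
  set C := ∑ m' : Fin (N+1), Real.exp (φ m') with hC
  have hCpos : 0 < C := Finset.sum_pos (fun i _ => Real.exp_pos _) ⟨m, Finset.mem_univ m⟩
  have hφC : Real.exp (φ m) ≤ C :=
    Finset.single_le_sum (fun i _ => (Real.exp_pos (φ i)).le) (Finset.mem_univ m)
  set V : Ω → ℝ := fun ω => ⨆ i, φ i + Y i ω with hV
  set A : Set Ω := {ω | ∀ m', m' ≠ m → φ m' + Y m' ω < φ m + Y m ω} with hA
  have hZmeas : ∀ i : Fin (N+1), Measurable (fun ω => φ i + Y i ω) :=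
    fun i => (hmeas i).const_add _
  have hVmeas : Measurable V := Measurable.iSup hZmeas
  have hAmeas : MeasurableSet A := by
    rw [hA, Set.setOf_forall]
    refine MeasurableSet.iInter fun i => ?_
    by_cases h : i = m
    · simp [h]
    · simp only [h, ne_eq, not_false_eq_true, forall_true_left]
      exact measurableSet_lt (hZmeas i) (hZmeas m)
  have hVx : ∀ (x : ℝ) (ω : Ω), V ω ≤ x ↔ ∀ i, φ i + Y i ω ≤ x := by
    intro x ω
    exact ciSup_le_iff (Set.Finite.bddAbove (Set.finite_range _))
  -- laws
  haveI : ∀ i : Fin (N+1), IsProbabilityMeasure ((ℙ : Measure Ω).map (Y i)) :=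
    fun i => Measure.isProbabilityMeasure_map (hmeas i).aemeasurable
  have hν : ∀ i : Fin (N+1), (ℙ : Measure Ω).map (Y i) = (volume : Measure ℝ).withDensity gd := by
    intro i
    refine eq_withDensity _ fun x => ?_
    rw [Measure.map_apply (hmeas i) measurableSet_Iic]
    exact hCDF i x
  haveI hwdP : IsProbabilityMeasure ((volume : Measure ℝ).withDensity gd) :=
    hν m ▸ inferInstance
  set T : Ω → (Fin (N+1) → ℝ) := fun ω i => Y i ω with hTdef
  have hTmeas : Measurable T := measurable_pi_lambda _ hmeas
  have hT : (ℙ : Measure Ω).map T = Measure.pi (fun _ => (volume : Measure ℝ).withDensity gd) := by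
    symm; apply Measure.pi_eq
    intro t ht
    rw [Measure.map_apply hTmeas (MeasurableSet.univ_pi ht)]
    have hpre : T ⁻¹' (univ.pi t) = ⋂ i, Y i ⁻¹' t i := by
      ext ω; simp [hTdef, Set.mem_pi]
    rw [hpre]
    calc ℙ (⋂ i, Y i ⁻¹' t i) = ∏ i, ℙ (Y i ⁻¹' t i) := by
          simpa using hindep.measure_inter_preimage_eq_mul (S := Finset.univ)
            (sets := t) (fun i _ => ht i)
      _ = ∏ i, ((volume : Measure ℝ).withDensity gd) (t i) :=
          Finset.prod_congr rfl fun i _ => by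
            rw [← hν i, Measure.map_apply (hmeas i) (ht i)]
  have claim1 : ∀ x : ℝ, ℙ {ω | V ω ≤ x}
      = ENNReal.ofReal (Real.exp (-(C * Real.exp (-x)))) := by
    intro x
    have hset : {ω | V ω ≤ x} = T ⁻¹' (univ.pi fun i => Iic (x - φ i)) := by
      ext ω
      simp only [mem_setOf_eq, hVx, Set.mem_preimage, Set.mem_pi, Set.mem_univ,
        forall_true_left, Set.mem_Iic, hTdef]
      exact forall_congr' fun i => by constructor <;> intro h <;> linarith
    rw [hset, ← Measure.map_apply hTmeas (MeasurableSet.univ_pi fun i => measurableSet_Iic),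
      hT, Measure.pi_pi]
    have hfac : ∀ i : Fin (N+1), ((volume : Measure ℝ).withDensity gd) (Iic (x - φ i))
        = ENNReal.ofReal (Real.exp (-(Real.exp (φ i) * Real.exp (-x)))) := by
      intro i; rw [wd_Iic]
      congr 2
      rw [← Real.exp_add]
      congr 1
      ring_nf
    simp only [hfac]
    rw [← ENNReal.ofReal_prod_of_nonneg (fun i _ => (Real.exp_nonneg _)), ← Real.exp_sum]
    congr 1
    rw [Finset.sum_neg_distrib, ← Finset.sum_mul, ← hC]
  -- claim 2
  set D := (C - Real.exp (φ m)) * Real.exp (-(φ m)) with hD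
  have hDnn : 0 ≤ D := mul_nonneg (by linarith) (Real.exp_nonneg _)
  have hexpm : Real.exp (φ m) * Real.exp (-(φ m)) = 1 := by
    rw [← Real.exp_add]; simp
  have h1D : 1 + D = C * Real.exp (-(φ m)) := by
    rw [hD]; nlinarith [hexpm]
  have claim2 : ∀ x : ℝ, ℙ (A ∩ {ω | V ω ≤ x})
      = ENNReal.ofReal (Real.exp (φ m) / C * Real.exp (-(C * Real.exp (-x)))) := by
    intro x
    set wd := (volume : Measure ℝ).withDensity gd with hwd
    set B : Set (ℝ × (Fin N → ℝ)) :=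
      {p | (∀ j, φ (m.succAbove j) + p.2 j < φ m + p.1) ∧ φ m + p.1 ≤ x} with hB
    have hBmeas : MeasurableSet B := by
      have h1 : MeasurableSet {p : ℝ × (Fin N → ℝ) |
          ∀ j, φ (m.succAbove j) + p.2 j < φ m + p.1} := by
        rw [Set.setOf_forall]
        exact MeasurableSet.iInter fun j => measurableSet_lt
          (((measurable_pi_apply j).comp measurable_snd).const_add _)
          (measurable_fst.const_add _)
      have h2 : MeasurableSet {p : ℝ × (Fin N → ℝ) | φ m + p.1 ≤ x} :=
        measurableSet_le (measurable_fst.const_add _) measurable_const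
      exact h1.inter h2
    set e := MeasurableEquiv.piFinSuccAbove (fun _ : Fin (N+1) => ℝ) m with he
    have hEB : A ∩ {ω | V ω ≤ x} = T ⁻¹' (⇑e ⁻¹' B) := by
      ext ω
      simp only [Set.mem_inter_iff, mem_setOf_eq, Set.mem_preimage, hA,
        MeasurableEquiv.piFinSuccAbove_apply, hB, hTdef, Fin.removeNth]
      constructor
      · rintro ⟨h1, h2⟩
        exact ⟨fun j => h1 _ (Fin.succAbove_ne m j), (hVx x ω).1 h2 m⟩
      · rintro ⟨h1, h2⟩
        have hAω : ∀ m', m' ≠ m → φ m' + Y m' ω < φ m + Y m ω := by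
          intro m' hm'
          obtain ⟨j, rfl⟩ := Fin.exists_succAbove_eq hm'
          exact h1 j
        refine ⟨hAω, (hVx x ω).2 fun i => ?_⟩
        by_cases hi : i = m
        · subst hi; exact h2
        · exact (hAω i hi).le.trans h2
    have hslice : ∀ t : ℝ, Prod.mk t ⁻¹' B =
        if φ m + t ≤ x then univ.pi (fun j => Iio (φ m + t - φ (m.succAbove j)))
        else (∅ : Set (Fin N → ℝ)) := by
      intro t
      by_cases h : φ m + t ≤ x
      · rw [if_pos h]
        ext r
        simp only [Set.mem_preimage, hB, mem_setOf_eq, Set.mem_pi, Set.mem_univ,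
          forall_true_left, Set.mem_Iio, h, and_true]
        exact forall_congr' fun j => by constructor <;> intro hh <;> linarith
      · rw [if_neg h]
        ext r
        simp only [Set.mem_preimage, hB, mem_setOf_eq, Set.mem_empty_iff_false, iff_false,
          not_and]
        exact fun _ => h
    have hsum : ∑ j : Fin N, Real.exp (φ (m.succAbove j)) = C - Real.exp (φ m) := by
      rw [hC, Fin.sum_univ_succAbove (fun i => Real.exp (φ i)) m]; ring
    have hval : ∀ t : ℝ, (Measure.pi fun _ : Fin N => wd)
        (univ.pi fun j => Iio (φ m + t - φ (m.succAbove j)))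
        = ENNReal.ofReal (Real.exp (-(D * Real.exp (-t)))) := by
      intro t
      rw [Measure.pi_pi]
      simp only [hwd, wd_Iio]
      rw [← ENNReal.ofReal_prod_of_nonneg (fun j _ => (Real.exp_nonneg _)), ← Real.exp_sum]
      congr 2
      have hterm : ∀ j : Fin N, Real.exp (-(φ m + t - φ (m.succAbove j)))
          = Real.exp (φ (m.succAbove j)) * (Real.exp (-(φ m)) * Real.exp (-t)) := by
        intro j
        rw [← Real.exp_add, ← Real.exp_add]
        congr 1; ring
      simp only [hterm]
      rw [Finset.sum_neg_distrib, ← Finset.sum_mul, hsum, hD]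
      ring
    rw [hEB, ← Measure.map_apply hTmeas (e.measurable hBmeas), hT]
    have hmp := (measurePreserving_piFinSuccAbove (fun _ : Fin (N+1) => wd) m)
    rw [hmp.measure_preimage hBmeas.nullMeasurableSet, Measure.prod_apply hBmeas]
    have hind : (fun t => (Measure.pi fun _ : Fin N => wd) (Prod.mk t ⁻¹' B))
        = fun t => Set.indicator (Iic (x - φ m))
            (fun t' => ENNReal.ofReal (Real.exp (-(D * Real.exp (-t'))))) t := by
      funext t
      rw [hslice t]
      by_cases h : φ m + t ≤ x
      · rw [if_pos h, hval t,
          Set.indicator_of_mem (show t ∈ Iic (x - φ m) by simp only [mem_Iic]; linarith)]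
      · rw [if_neg h,
          Set.indicator_of_notMem (show t ∉ Iic (x - φ m) by simp only [mem_Iic]; push_neg; linarith)]
        simp
    rw [hind, lintegral_indicator measurableSet_Iic _, key_lintegral hDnn (x - φ m)]
    congr 1
    have hx1 : (1 + D) * Real.exp (-(x - φ m)) = C * Real.exp (-x) := by
      rw [h1D, show Real.exp (-(x - φ m)) = Real.exp (φ m) * Real.exp (-x) from by
        rw [← Real.exp_add]; congr 1; ring]
      linear_combination (C * Real.exp (-x)) * hexpm
    rw [hx1, h1D]
    rw [div_eq_iff (by positivity : C * Real.exp (-(φ m)) ≠ 0)]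
    field_simp
    linear_combination (-1 : ℝ) * hexpm
  -- assemble
  have hnninv : (0:ℝ) ≤ Real.exp (φ m) / C := by positivity
  have hμeq : ((ℙ : Measure Ω).restrict A).map V
      = (ENNReal.ofReal (Real.exp (φ m) / C)) • ((ℙ : Measure Ω).map V) := by
    haveI : IsFiniteMeasure (((ℙ : Measure Ω).restrict A).map V) :=
      ⟨by rw [Measure.map_apply hVmeas MeasurableSet.univ]; exact measure_lt_top _ _⟩
    refine Measure.ext_of_Iic _ _ fun a => ?_
    rw [Measure.map_apply hVmeas measurableSet_Iic,
      Measure.restrict_apply (hVmeas measurableSet_Iic), Measure.smul_apply,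
      Measure.map_apply hVmeas measurableSet_Iic, smul_eq_mul]
    rw [show V ⁻¹' Iic a = {ω | V ω ≤ a} from rfl, Set.inter_comm, claim2 a, claim1 a,
      ← ENNReal.ofReal_mul hnninv]
  have hfin := congrArg (fun μ : Measure ℝ => μ s) hμeq
  simp only [Measure.map_apply hVmeas hs, Measure.restrict_apply (hVmeas hs),
    Measure.smul_apply, smul_eq_mul] at hfin
  rw [Set.inter_comm] at hfin
  exact hfin
end
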